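/- Let G be a simple graph that is C4-free and diamond-free (as induced subgraphs), and let Ĝ be the bipartite incidence graph whose vertex set is V(G) together with one vertex per maximal clique of G, where a vertex u of G is joined to a clique-vertex c_C if and only if u ∈ C and u belongs to at least two maximal cliques of G. Then for every S ⊆ V(G): G \ S is a block graph if and only if Ĝ \ S is acyclic. -/

import Mathlib

/-- `{a,b,c,d}` induce a C4 in `G` (cycle a-b-c-d-a, with chords absent). -/
def IsInducedC4 {V : Type*} (G : SimpleGraph V) (a b c d : V) : Prop :=
  a ≠ b ∧ a ≠ c ∧ a ≠ d ∧ b ≠ c ∧ b ≠ d ∧ c ≠ d ∧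
  G.Adj a b ∧ G.Adj b c ∧ G.Adj c d ∧ G.Adj d a ∧ ¬ G.Adj a c ∧ ¬ G.Adj b d

/-- `{a,b,c,d}` induce a diamond (K4 minus the edge bd) in `G`. -/
def IsInducedDiamond {V : Type*} (G : SimpleGraph V) (a b c d : V) : Prop :=
  a ≠ b ∧ a ≠ c ∧ a ≠ d ∧ b ≠ c ∧ b ≠ d ∧ c ≠ d ∧
  G.Adj a b ∧ G.Adj b c ∧ G.Adj c d ∧ G.Adj d a ∧ G.Adj a c ∧ ¬ G.Adj b d


/-- `G` has an induced cycle of length at least 4. -/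
def HasLongInducedCycle {V : Type*} (G : SimpleGraph V) : Prop :=
  ∃ (n : ℕ) (f : ZMod n → V), 4 ≤ n ∧ Function.Injective f ∧
    ∀ i j : ZMod n, G.Adj (f i) (f j) ↔ (j = i + 1 ∨ i = j + 1)

/-- A block graph: no induced cycle of length ≥ 4 and no induced diamond. -/
def IsBlockGraph {V : Type*} (G : SimpleGraph V) : Prop :=
  ¬ HasLongInducedCycle G ∧ ∀ a b c d : V, ¬ IsInducedDiamond G a b c d

/-- `B` induces a (2-)connected subgraph of `G` with no cut vertex. -/
def IsBiconnectedSet {V : Type*} (G : SimpleGraph V) (B : Set V) : Prop :=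
  (G.induce B).Connected ∧ ∀ x ∈ B, (G.induce (B \ {x})).Preconnected

namespace Stmt9Aux

variable {V : Type*} {G : SimpleGraph V}

abbrev K (G : SimpleGraph V) := {s : Set V // Maximal G.IsClique s}

lemma exists_maximal_clique [Finite V] {s : Set V} (hs : G.IsClique s) :
    ∃ C : K G, s ⊆ C.val := by
  obtain ⟨t, hle, ht⟩ := Finite.exists_le_maximal hs
  exact ⟨⟨t, ht⟩, hle⟩

lemma clique_eq_of_adj (hD : ∀ a b c d : V, ¬ IsInducedDiamond G a b c d)
    {u w : V} (huw : G.Adj u w) (C C' : K G)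
    (huC : u ∈ C.val) (hwC : w ∈ C.val) (huC' : u ∈ C'.val) (hwC' : w ∈ C'.val) :
    C = C' := by
  by_contra hne
  have hsub : ¬ C.val ⊆ C'.val := by
    intro h
    exact hne (Subtype.ext (C.2.eq_of_subset C'.2.prop h))
  obtain ⟨x, hxC, hxC'⟩ := Set.not_subset.mp hsub
  -- insert x C' is not a clique
  have hnot : ¬ G.IsClique (insert x C'.val) := fun h => hxC' (C'.2.mem_of_prop_insert h)
  rw [SimpleGraph.isClique_iff] at hnot
  -- extract a non-adjacent pair
  have hex : ∃ a ∈ insert x C'.val, ∃ b ∈ insert x C'.val, a ≠ b ∧ ¬ G.Adj a b := by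
    by_contra h
    push_neg at h
    exact hnot fun a ha b hb hab => h a ha b hb hab
  obtain ⟨a, ha, b, hb, hab, hnadj⟩ := hex
  -- find y ∈ C' with y ≠ x, ¬ adj x y
  obtain ⟨y, hyC', hyx, hnxy⟩ : ∃ y ∈ C'.val, y ≠ x ∧ ¬ G.Adj x y := by
    rcases ha with rfl | ha
    · rcases hb with rfl | hb
      · exact absurd rfl hab
      · exact ⟨b, hb, fun h => hab h.symm, hnadj⟩
    · rcases hb with rfl | hb
      · exact ⟨a, ha, hab, fun h => hnadj h.symm⟩
      · exact absurd (C'.2.prop ha hb hab) hnadj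
  have hxu : x ≠ u := fun h => hxC' (h ▸ huC')
  have hxw : x ≠ w := fun h => hxC' (h ▸ hwC')
  have hxadju : G.Adj x u := C.2.prop hxC huC hxu
  have hxadjw : G.Adj x w := C.2.prop hxC hwC hxw
  have hyu : y ≠ u := fun h => hnxy (h ▸ hxadju)
  have hyw : y ≠ w := fun h => hnxy (h ▸ hxadjw)
  have hyadju : G.Adj y u := C'.2.prop hyC' huC' hyu
  have hyadjw : G.Adj y w := C'.2.prop hyC' hwC' hyw
  exact hD u x w y ⟨fun h => hxu h.symm, huw.ne, fun h => hyu h.symm, hxw,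
    fun h => hyx h.symm, fun h => hyw h.symm, hxadju.symm, hxadjw, hyadjw.symm,
    hyadju, huw, hnxy⟩

lemma natCast_zmod_inj {k a b : ℕ} (ha : a < k) (hb : b < k) (h : (a : ZMod k) = b) : a = b := by
  have := congrArg ZMod.val h
  rwa [ZMod.val_cast_of_lt ha, ZMod.val_cast_of_lt hb] at this

section CCsec
variable (G) (S : Set V)

structure CC (k : ℕ) where
  v : ZMod k → V
  c : ZMod k → K G
  hk : 2 ≤ k
  hv : Function.Injective v
  hc : Function.Injective c
  hm1 : ∀ i, v i ∈ (c i).val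
  hm2 : ∀ i, v (i + 1) ∈ (c i).val
  hS : ∀ i, v i ∉ S

end CCsec

namespace CC

variable {S : Set V} {k : ℕ}

lemma one_lt (D : CC G S k) : 1 < k := D.hk

lemma nz (D : CC G S k) : NeZero k := ⟨by have := D.hk; omega⟩

lemma succ_ne (D : CC G S k) (i : ZMod k) : i + 1 ≠ i := by
  haveI : Fact (1 < k) := ⟨D.one_lt⟩
  intro h
  have h1 : (1 : ZMod k) = 0 := by
    have := congrArg (· - i) h
    simpa [add_comm, add_sub_cancel_right] using this
  have := congrArg ZMod.val h1
  rw [ZMod.val_one, ZMod.val_zero] at this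
  exact one_ne_zero this

lemma adj_succ (D : CC G S k) (i : ZMod k) : G.Adj (D.v i) (D.v (i + 1)) := by
  refine (D.c i).2.prop (D.hm1 i) (D.hm2 i) ?_
  exact fun h => D.succ_ne i (D.hv h.symm)

/-- Rotate a combinatorial cycle. -/
def rotate (D : CC G S k) (t : ZMod k) : CC G S k where
  v i := D.v (i + t)
  c i := D.c (i + t)
  hk := D.hk
  hv a b h := add_right_cancel (D.hv h)
  hc a b h := add_right_cancel (D.hc h)
  hm1 i := D.hm1 (i + t)
  hm2 i := by
    have h := D.hm2 (i + t)
    rwa [show i + t + 1 = i + 1 + t by ring] at h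
  hS i := D.hS (i + t)

lemma not_two (hD : ∀ a b c d : V, ¬ IsInducedDiamond G a b c d) (D : CC G S 2) : False := by
  have h01 : (0 : ZMod 2) ≠ 1 := by decide
  have hne : D.v 0 ≠ D.v 1 := fun h => h01 (D.hv h)
  have hadj : G.Adj (D.v 0) (D.v 1) := by
    have := D.adj_succ 0; simpa using this
  have hv00 : D.v 0 ∈ (D.c 0).val := D.hm1 0
  have hv10 : D.v 1 ∈ (D.c 0).val := by have := D.hm2 0; simpa using this
  have hv11 : D.v 1 ∈ (D.c 1).val := D.hm1 1
  have hv01 : D.v 0 ∈ (D.c 1).val := by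
    have := D.hm2 1
    norm_num at this
    exact this
  have := clique_eq_of_adj hD hadj (D.c 0) (D.c 1) hv00 hv10 hv01 hv11
  exact h01 (D.hc this)

lemma not_three [Finite V] (hD : ∀ a b c d : V, ¬ IsInducedDiamond G a b c d)
    (D : CC G S 3) : False := by
  have h01 : G.Adj (D.v 0) (D.v 1) := by have := D.adj_succ 0; simpa using this
  have h12 : G.Adj (D.v 1) (D.v 2) := by have := D.adj_succ 1; norm_num at this; exact this
  have h20 : G.Adj (D.v 2) (D.v 0) := by
    have := D.adj_succ 2
    norm_num at this
    exact this
  have hclique : G.IsClique {D.v 0, D.v 1, D.v 2} := by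
    intro a ha b hb hab
    simp only [Set.mem_insert_iff, Set.mem_singleton_iff] at ha hb
    rcases ha with rfl | rfl | rfl <;> rcases hb with rfl | rfl | rfl <;>
      first
        | exact absurd rfl hab
        | assumption
        | exact h01.symm
        | exact h12.symm
        | exact h20.symm
  obtain ⟨Dm, hsub⟩ := exists_maximal_clique hclique
  have e0 : D.c 0 = Dm := clique_eq_of_adj hD h01 (D.c 0) Dm (D.hm1 0)
    (by have := D.hm2 0; simpa using this) (hsub (by simp)) (hsub (by simp))
  have e1 : D.c 1 = Dm := clique_eq_of_adj hD h12 (D.c 1) Dm (D.hm1 1)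
    (by have := D.hm2 1; norm_num at this; exact this) (hsub (by simp)) (hsub (by simp))
  have : (0 : ZMod 3) = 1 := D.hc (e0.trans e1.symm)
  exact absurd this (by decide)


/-- Case A of chord-surgery: the chord's clique is new. -/
lemma shrinkA (D : CC G S k) (D0 : K G) {e : ℕ} (he2 : 2 ≤ e) (hek : e ≤ k - 2)
    (hv0 : D.v 0 ∈ D0.val) (hvd : D.v (e : ZMod k) ∈ D0.val)
    (hnot : ∀ l, D.c l ≠ D0) : Nonempty (CC G S (e + 1)) := by
  have hk2 : 2 ≤ k := D.hk
  have hek' : e + 1 < k := by omega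
  refine ⟨⟨fun i => D.v ((i.val : ℕ) : ZMod k),
      fun i => if i.val = e then D0 else D.c ((i.val : ℕ) : ZMod k),
      by omega, ?_, ?_, ?_, ?_, fun i => D.hS _⟩⟩
  · -- injectivity of v
    intro a b h
    have h2 := D.hv h
    have ha : a.val < k := lt_of_lt_of_le (ZMod.val_lt a) (by omega)
    have hb : b.val < k := lt_of_lt_of_le (ZMod.val_lt b) (by omega)
    exact ZMod.val_injective _ (natCast_zmod_inj ha hb h2)
  · -- injectivity of c
    intro a b h
    simp only at h
    have ha' : a.val < k := lt_of_lt_of_le (ZMod.val_lt a) (by omega)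
    have hb' : b.val < k := lt_of_lt_of_le (ZMod.val_lt b) (by omega)
    split_ifs at h with h1 h2 h2
    · exact ZMod.val_injective _ (h1.trans h2.symm)
    · exact absurd h.symm (hnot _)
    · exact absurd h (hnot _)
    · exact ZMod.val_injective _ (natCast_zmod_inj ha' hb' (D.hc h))
  · -- hm1
    intro i
    by_cases hi : i.val = e
    · simp only [if_pos hi, hi]
      exact hvd
    · simp only [if_neg hi]
      exact D.hm1 _
  · -- hm2
    intro i
    haveI : Fact (1 < e + 1) := ⟨by omega⟩
    have hvl : i.val < e + 1 := ZMod.val_lt i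
    by_cases hi : i.val = e
    · simp only [if_pos hi]
      have hi1 : i + 1 = 0 := by
        apply ZMod.val_injective
        rw [ZMod.val_add, ZMod.val_one, hi, ZMod.val_zero, Nat.mod_self]
      rw [hi1]
      simpa using hv0
    · simp only [if_neg hi]
      have h1 : (i + 1).val = i.val + 1 := by
        rw [ZMod.val_add, ZMod.val_one, Nat.mod_eq_of_lt (by omega)]
      rw [h1]
      have := D.hm2 ((i.val : ℕ) : ZMod k)
      rwa [show ((i.val : ℕ) : ZMod k) + 1 = (((i.val + 1 : ℕ)) : ZMod k) by push_cast; ring] at this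

/-- Case B of chord-surgery: a vertex belongs to a non-incident clique of the cycle. -/
lemma shrinkB (D : CC G S k) {m : ZMod k} (hm0 : m ≠ 0) (hm1 : m ≠ 1)
    (hmem : D.v m ∈ (D.c 0).val) : ∃ k', 2 ≤ k' ∧ k' < k ∧ Nonempty (CC G S k') := by
  have hk2 : 2 ≤ k := D.hk
  haveI : NeZero k := ⟨by omega⟩
  set e := m.val with hedef
  have hme : ((e : ℕ) : ZMod k) = m := ZMod.natCast_rightInverse m
  have he0 : e ≠ 0 := fun h => hm0 (by rw [← hme, h]; simp)
  have he1 : e ≠ 1 := fun h => hm1 (by rw [← hme, h]; simp)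
  have hek : e < k := ZMod.val_lt m
  haveI : NeZero e := ⟨by omega⟩
  refine ⟨e, by omega, hek, ⟨⟨fun i => D.v ((i.val + 1 : ℕ) : ZMod k),
      fun i => if i.val = e - 1 then D.c 0 else D.c ((i.val + 1 : ℕ) : ZMod k),
      by omega, ?_, ?_, ?_, ?_, fun i => D.hS _⟩⟩⟩
  · intro a b h
    have ha : a.val + 1 < k := by have := ZMod.val_lt a; omega
    have hb : b.val + 1 < k := by have := ZMod.val_lt b; omega
    have := natCast_zmod_inj ha hb (D.hv h)
    exact ZMod.val_injective _ (by omega)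
  · intro a b h
    simp only at h
    have ha : a.val + 1 < k := by have := ZMod.val_lt a; omega
    have hb : b.val + 1 < k := by have := ZMod.val_lt b; omega
    split_ifs at h with h1 h2 h2
    · exact ZMod.val_injective _ (h1.trans h2.symm)
    · exfalso
      have h' : ((0 : ℕ) : ZMod k) = ((b.val + 1 : ℕ) : ZMod k) := by
        exact_mod_cast D.hc h
      have := natCast_zmod_inj (by omega : (0:ℕ) < k) hb h'
      omega
    · exfalso
      have h' : ((a.val + 1 : ℕ) : ZMod k) = ((0 : ℕ) : ZMod k) := by
        exact_mod_cast D.hc h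
      have := natCast_zmod_inj ha (by omega : (0:ℕ) < k) h'
      omega
    · have := natCast_zmod_inj ha hb (D.hc h)
      exact ZMod.val_injective _ (by omega)
  · intro i
    by_cases hi : i.val = e - 1
    · simp only [if_pos hi, hi]
      rw [show e - 1 + 1 = e by omega, hme]
      exact hmem
    · simp only [if_neg hi]
      exact D.hm1 _
  · intro i
    haveI : Fact (1 < e) := ⟨by omega⟩
    have hvl : i.val < e := ZMod.val_lt i
    by_cases hi : i.val = e - 1
    · simp only [if_pos hi]
      have hi1 : i + 1 = 0 := by
        apply ZMod.val_injective
        rw [ZMod.val_add, ZMod.val_one, hi, ZMod.val_zero,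
          show e - 1 + 1 = e by omega, Nat.mod_self]
      rw [hi1]
      have := D.hm2 0
      simpa using this
    · simp only [if_neg hi]
      have h1 : (i + 1).val = i.val + 1 := by
        rw [ZMod.val_add, ZMod.val_one, Nat.mod_eq_of_lt (by omega)]
      rw [h1]
      have := D.hm2 ((i.val + 1 : ℕ) : ZMod k)
      rwa [show ((i.val + 1 : ℕ) : ZMod k) + 1 = (((i.val + 1 + 1 : ℕ)) : ZMod k) by
        push_cast; ring] at this

lemma shrink_of_chord [Finite V] (hD : ∀ a b c d : V, ¬ IsInducedDiamond G a b c d)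
    (D : CC G S k) {i j : ZMod k}
    (hadj : G.Adj (D.v i) (D.v j)) (h1 : j ≠ i + 1) (h2 : i ≠ j + 1) :
    ∃ k', 2 ≤ k' ∧ k' < k ∧ Nonempty (CC G S k') := by
  have hk2 : 2 ≤ k := D.hk
  haveI : NeZero k := ⟨by omega⟩
  set D' := D.rotate i with hD'
  set d := j - i with hd
  have hv'0 : D'.v 0 = D.v i := by simp [hD', CC.rotate]
  have hv'd : D'.v d = D.v j := by simp [hD', CC.rotate, hd]
  have hadj' : G.Adj (D'.v 0) (D'.v d) := by rw [hv'0, hv'd]; exact hadj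
  have hd1 : d ≠ 1 := fun h => h1 ((sub_eq_iff_eq_add.mp (hd ▸ h)).trans (add_comm 1 i))
  have hdm : d ≠ -1 := fun h => h2 (by
    have h' := sub_eq_iff_eq_add.mp (hd ▸ h)
    rw [h']; ring)
  have hd0 : d ≠ 0 := by
    intro h
    rw [h] at hadj'
    exact G.irrefl hadj'
  -- numeric bounds on e := d.val
  set e := d.val with hedef
  have hme : ((e : ℕ) : ZMod k) = d := ZMod.natCast_rightInverse d
  have he0 : e ≠ 0 := fun h => hd0 (by rw [← hme, h, Nat.cast_zero])
  have he1 : e ≠ 1 := fun h => hd1 (by rw [← hme, h, Nat.cast_one])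
  have hekk : e < k := ZMod.val_lt d
  have hem : e ≠ k - 1 := by
    intro h
    apply hdm
    rw [← hme, h, Nat.cast_sub (by omega), ZMod.natCast_self, Nat.cast_one, zero_sub]
  have he2 : 2 ≤ e := by omega
  have hek : e ≤ k - 2 := by omega
  -- a maximal clique containing the chord
  have hpair : G.IsClique {D'.v 0, D'.v d} := SimpleGraph.isClique_pair.mpr fun _ => hadj'
  obtain ⟨D0, hsub⟩ := exists_maximal_clique hpair
  have hv0 : D'.v 0 ∈ D0.val := hsub (by simp)
  have hvd : D'.v d ∈ D0.val := hsub (by simp)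
  by_cases hr : ∃ l, D'.c l = D0
  · obtain ⟨l, hl⟩ := hr
    have hv0l : D'.v 0 ∈ (D'.c l).val := by rw [hl]; exact hv0
    have hvdl : D'.v d ∈ (D'.c l).val := by rw [hl]; exact hvd
    -- find m ∉ {l, l+1} with D'.v m ∈ D'.c l
    obtain ⟨m, hml, hml1, hmem⟩ :
        ∃ m : ZMod k, m ≠ l ∧ m ≠ l + 1 ∧ D'.v m ∈ (D'.c l).val := by
      by_cases h0 : (0 : ZMod k) = l ∨ (0 : ZMod k) = l + 1
      · refine ⟨d, ?_, ?_, hvdl⟩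
        · intro hdl
          rcases h0 with h0 | h0
          · exact hd0 (hdl.trans h0.symm)
          · apply hdm
            have hl : l = -1 := by linear_combination -h0
            rw [hdl, hl]
        · intro hdl
          rcases h0 with h0 | h0
          · exact hd1 (by rw [hdl, ← h0, zero_add])
          · exact hd0 (hdl.trans h0.symm)
      · push_neg at h0
        exact ⟨0, fun h => h0.1 h, fun h => h0.2 h, hv0l⟩
    -- rotate so that the clique sits at position 0 and shrink
    set D'' := D'.rotate l with hD''
    have hc0 : D''.c 0 = D'.c l := by simp [hD'', CC.rotate]
    have hvm : D''.v (m - l) = D'.v m := by simp [hD'', CC.rotate]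
    have := D''.shrinkB (m := m - l) (by
        intro h; exact hml (by rwa [sub_eq_zero] at h))
      (by intro h; exact hml1 (by rw [sub_eq_iff_eq_add.mp h, add_comm])) (by
        rw [hvm, hc0]; exact hmem)
    exact this
  · push_neg at hr
    have := D'.shrinkA D0 he2 hek hv0 (by rw [hme]; exact hvd) hr
    exact ⟨e + 1, by omega, by omega, this⟩

end CC
section GhatPart

variable {S : Set V} {k : ℕ}
variable {Ghat : SimpleGraph (V ⊕ K G)}

/-- The vertex set of `Ĝ \ S`. -/
def Wset (G : SimpleGraph V) (S : Set V) : Set (V ⊕ K G) :=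
  {w | ∀ s ∈ S, w ≠ Sum.inl s}

namespace CC

lemma one_ne_zero' (D : CC G S k) : (1 : ZMod k) ≠ 0 := by
  haveI : Fact (1 < k) := ⟨D.one_lt⟩
  intro h
  have := congrArg ZMod.val h
  rw [ZMod.val_one, ZMod.val_zero] at this
  exact one_ne_zero this

lemma sub_one_ne (D : CC G S k) (x : ZMod k) : x - 1 ≠ x := by
  intro h
  exact D.one_ne_zero' (by linear_combination -h)

lemma succ_ne' (D : CC G S k) (x : ZMod k) : x + 1 ≠ x := by
  intro h
  exact D.one_ne_zero' (by linear_combination h)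

variable (D : CC G S k)

/-- The `V`-side vertices of the cycle, inside `Ĝ \ S`. -/
def X (n : ℕ) : ↥(Wset G S) :=
  ⟨Sum.inl (D.v n), by
    intro s hs h
    rw [Sum.inl.injEq] at h
    exact D.hS n (h ▸ hs)⟩

/-- The clique-side vertices of the cycle, inside `Ĝ \ S`. -/
def Y (n : ℕ) : ↥(Wset G S) :=
  ⟨Sum.inr (D.c n), by intro s hs h; exact Sum.inr_ne_inl h⟩

variable (hVC : ∀ (u : V) (c : K G),
      Ghat.Adj (Sum.inl u) (Sum.inr c) ↔
        (u ∈ c.val ∧ ∃ c' : K G, c' ≠ c ∧ u ∈ c'.val))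

include D hVC in
lemma adjXY (n : ℕ) : (Ghat.induce (Wset G S)).Adj (D.X n) (D.Y n) := by
  show Ghat.Adj (Sum.inl (D.v n)) (Sum.inr (D.c n))
  refine (hVC _ _).mpr ⟨D.hm1 n, D.c ((n : ZMod k) - 1), ?_, ?_⟩
  · intro h
    exact D.sub_one_ne (n : ZMod k) (D.hc h)
  · have := D.hm2 ((n : ZMod k) - 1)
    rwa [sub_add_cancel] at this

include D hVC in
lemma adjYX (n : ℕ) : (Ghat.induce (Wset G S)).Adj (D.Y n) (D.X (n + 1)) := by
  have hcast : ((n + 1 : ℕ) : ZMod k) = (n : ZMod k) + 1 := by push_cast; ring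
  show Ghat.Adj (Sum.inr (D.c (n : ℕ))) (Sum.inl (D.v ((n + 1 : ℕ) : ZMod k)))
  refine ((hVC _ _).mpr ⟨?_, D.c ((n + 1 : ℕ) : ZMod k), ?_, D.hm1 _⟩).symm
  · rw [hcast]
    exact D.hm2 _
  · intro h
    have h2 := D.hc h
    rw [hcast] at h2
    exact D.succ_ne' _ h2

lemma X_ne {a b : ℕ} (ha : a < k) (hb : b < k) (hab : a ≠ b) : D.X a ≠ D.X b := by
  intro h
  have h2 : (Sum.inl (D.v a) : V ⊕ K G) = Sum.inl (D.v b) := congrArg Subtype.val h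
  rw [Sum.inl.injEq] at h2
  exact hab (natCast_zmod_inj ha hb (D.hv h2))

lemma Y_ne {a b : ℕ} (ha : a < k) (hb : b < k) (hab : a ≠ b) : D.Y a ≠ D.Y b := by
  intro h
  have h2 : (Sum.inr (D.c a) : V ⊕ K G) = Sum.inr (D.c b) := congrArg Subtype.val h
  rw [Sum.inr.injEq] at h2
  exact hab (natCast_zmod_inj ha hb (D.hc h2))

lemma X_ne_Y (a b : ℕ) : D.X a ≠ D.Y b := by
  intro h
  exact Sum.inl_ne_inr (congrArg Subtype.val h)

lemma X_wrap : D.X k = D.X 0 := by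
  apply Subtype.ext
  show (Sum.inl (D.v ((k : ℕ) : ZMod k)) : V ⊕ K G) = Sum.inl (D.v ((0 : ℕ) : ZMod k))
  rw [ZMod.natCast_self, Nat.cast_zero]

/-- The long walk `v 1 — c 1 — v 2 — ⋯ — v (m+1)` in `Ĝ \ S`. -/
def Q : (m : ℕ) → (Ghat.induce (Wset G S)).Walk (D.X 1) (D.X (m + 1))
  | 0 => SimpleGraph.Walk.nil
  | m + 1 => ((Q m).concat (D.adjXY hVC (m + 1))).concat (D.adjYX hVC (m + 1))

lemma Q_good (m : ℕ) (hm : m + 1 ≤ k) :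
    (D.Q hVC m).support.Nodup ∧
    ∀ z ∈ (D.Q hVC m).support,
      (∃ i, i ≤ m ∧ z = D.X (i + 1)) ∨ (∃ i, i < m ∧ z = D.Y (i + 1)) := by
  have hk2 : 2 ≤ k := D.hk
  induction m with
  | zero =>
    constructor
    · simp [Q]
    · intro z hz
      simp only [Q, SimpleGraph.Walk.support_nil, List.mem_singleton] at hz
      exact Or.inl ⟨0, le_refl 0, hz⟩
  | succ m ih =>
    obtain ⟨ihnd, ihmem⟩ := ih (by omega)
    have hsupp : (D.Q hVC (m + 1)).support
        = ((D.Q hVC m).support ++ [D.Y (m + 1)]) ++ [D.X (m + 2)] := by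
      show (((D.Q hVC m).concat _).concat _).support = _
      rw [SimpleGraph.Walk.support_concat, SimpleGraph.Walk.support_concat]
    have hYnotin : D.Y (m + 1) ∉ (D.Q hVC m).support := by
      intro hmem
      rcases ihmem _ hmem with ⟨i, hi, hz⟩ | ⟨i, hi, hz⟩
      · exact D.X_ne_Y (i + 1) (m + 1) hz.symm
      · exact D.Y_ne (by omega) (by omega) (by omega) hz.symm
    have hXnotin : D.X (m + 2) ∉ (D.Q hVC m).support := by
      intro hmem
      rcases ihmem _ hmem with ⟨i, hi, hz⟩ | ⟨i, hi, hz⟩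
      · by_cases hcase : m + 2 = k
        · rw [hcase, D.X_wrap] at hz
          exact D.X_ne (by omega) (by omega) (by omega) hz
        · exact D.X_ne (by omega) (by omega) (by omega) hz.symm
      · exact D.X_ne_Y (m + 2) (i + 1) hz
    constructor
    · rw [hsupp]
      rw [List.nodup_append, List.nodup_append]
      refine ⟨⟨ihnd, List.nodup_singleton _, ?_⟩, List.nodup_singleton _, ?_⟩
      · intro a ha b hb hab
        rw [List.mem_singleton] at hb
        subst hb
        subst hab
        exact hYnotin ha
      · intro a ha b hb hab
        rw [List.mem_singleton] at hb
        subst hb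
        subst hab
        rw [List.mem_append] at ha
        rcases ha with ha | ha
        · exact hXnotin ha
        · rw [List.mem_singleton] at ha
          exact D.X_ne_Y (m + 2) (m + 1) ha
    · intro z hz
      rw [hsupp, List.mem_append, List.mem_append] at hz
      rcases hz with (hz | hz) | hz
      · rcases ihmem _ hz with ⟨i, hi, hzz⟩ | ⟨i, hi, hzz⟩
        · exact Or.inl ⟨i, by omega, hzz⟩
        · exact Or.inr ⟨i, by omega, hzz⟩
      · rw [List.mem_singleton] at hz
        exact Or.inr ⟨m, by omega, hz⟩
      · rw [List.mem_singleton] at hz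
        exact Or.inl ⟨m + 1, by omega, hz⟩

include D hVC in
/-- A combinatorial cycle yields two distinct paths, so `Ĝ \ S` is not acyclic. -/
lemma not_acyclic : ¬ (Ghat.induce (Wset G S)).IsAcyclic := by
  have hk2 : 2 ≤ k := D.hk
  rw [SimpleGraph.isAcyclic_iff_path_unique]
  intro huniq
  -- short path  v 0 — c 0 — v 1
  let p : (Ghat.induce (Wset G S)).Walk (D.X 0) (D.X 1) :=
    SimpleGraph.Walk.cons (D.adjXY hVC 0) (SimpleGraph.Walk.cons (D.adjYX hVC 0)
      SimpleGraph.Walk.nil)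
  have hp : p.IsPath := by
    rw [SimpleGraph.Walk.isPath_def]
    show List.Nodup [D.X 0, D.Y 0, D.X 1]
    refine List.nodup_cons.mpr ⟨?_, List.nodup_cons.mpr ⟨?_, List.nodup_singleton _⟩⟩
    · intro h
      rcases List.mem_cons.mp h with h | h
      · exact D.X_ne_Y 0 0 h
      · rw [List.mem_singleton] at h
        exact D.X_ne (by omega) (by omega) (by omega) h
    · intro h
      rw [List.mem_singleton] at h
      exact D.X_ne_Y 1 0 h.symm
  -- long path the other way around
  have hend : D.X (k - 1 + 1) = D.X 0 := by
    rw [show k - 1 + 1 = k by omega, D.X_wrap]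
  let q : (Ghat.induce (Wset G S)).Walk (D.X 0) (D.X 1) :=
    ((D.Q hVC (k - 1)).copy rfl hend).reverse
  obtain ⟨hnd, hmem⟩ := D.Q_good hVC (k - 1) (by omega)
  have hqsupp : q.support = ((D.Q hVC (k - 1)).support).reverse := by
    show ((D.Q hVC (k - 1)).copy rfl hend).reverse.support = _
    rw [SimpleGraph.Walk.support_reverse, SimpleGraph.Walk.support_copy]
  have hq : q.IsPath := by
    rw [SimpleGraph.Walk.isPath_def, hqsupp]
    rwa [List.nodup_reverse]
  have := huniq ⟨p, hp⟩ ⟨q, hq⟩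
  have hpq : p = q := congrArg Subtype.val this
  have hY0 : D.Y 0 ∈ q.support := by
    rw [← hpq]
    show D.Y 0 ∈ [D.X 0, D.Y 0, D.X 1]
    simp
  rw [hqsupp, List.mem_reverse] at hY0
  rcases hmem _ hY0 with ⟨i, hi, hz⟩ | ⟨i, hi, hz⟩
  · exact D.X_ne_Y (i + 1) 0 hz.symm
  · exact D.Y_ne (by omega) (by omega) (by omega) hz.symm

end CC

end GhatPart

section Assemble

variable {S : Set V}

/-- A minimal combinatorial cycle gives an induced long cycle in `G \ S`. -/
lemma cc_to_long [Finite V] (hD : ∀ a b c d : V, ¬ IsInducedDiamond G a b c d)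
    (h : ∃ k, Nonempty (CC G S k)) : HasLongInducedCycle (G.induce Sᶜ) := by
  classical
  obtain ⟨D⟩ := Nat.find_spec h
  have hmin : ∀ k' < Nat.find h, ¬ Nonempty (CC G S k') := fun k' hk' => Nat.find_min h hk'
  have hk2 : 2 ≤ Nat.find h := D.hk
  have hk4 : 4 ≤ Nat.find h := by
    by_contra hlt
    have h23 : Nat.find h = 2 ∨ Nat.find h = 3 := by omega
    rcases h23 with h2 | h3
    · exact CC.not_two hD (h2 ▸ D)
    · exact CC.not_three hD (h3 ▸ D)
  have hcf : ∀ i j : ZMod (Nat.find h), G.Adj (D.v i) (D.v j) → (j = i + 1 ∨ i = j + 1) := by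
    intro i j hadj
    by_contra hcon
    push_neg at hcon
    obtain ⟨k', _, hk'lt, hcc⟩ := D.shrink_of_chord hD hadj hcon.1 hcon.2
    exact hmin k' hk'lt hcc
  refine ⟨Nat.find h, fun i => ⟨D.v i, D.hS i⟩, hk4, ?_, ?_⟩
  · intro a b hab
    exact D.hv (congrArg Subtype.val hab)
  · intro i j
    constructor
    · intro hadj
      exact hcf i j hadj
    · rintro (rfl | rfl)
      · exact D.adj_succ i
      · exact (D.adj_succ j).symm

/-- An induced long cycle in `G \ S` gives a combinatorial cycle. -/
lemma long_to_cc [Finite V] (h : HasLongInducedCycle (G.induce Sᶜ)) :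
    ∃ k, Nonempty (CC G S k) := by
  classical
  obtain ⟨n, f, hn4, hinj, hiff⟩ := h
  haveI : NeZero n := ⟨by omega⟩
  have hz : ∀ m : ℕ, 0 < m → m < n → ((m : ℕ) : ZMod n) ≠ 0 := by
    intro m h1 h2 heq
    have := congrArg ZMod.val heq
    rw [ZMod.val_cast_of_lt h2, ZMod.val_zero] at this
    omega
  have hadj : ∀ i : ZMod n, G.Adj (f i).val (f (i + 1)).val := by
    intro i
    exact (hiff i (i + 1)).mpr (Or.inl rfl)
  have hCex : ∀ i : ZMod n, ∃ C : K G, (f i).val ∈ C.val ∧ (f (i + 1)).val ∈ C.val := by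
    intro i
    obtain ⟨C, hsub⟩ :=
      exists_maximal_clique (SimpleGraph.isClique_pair.mpr fun _ => hadj i)
    exact ⟨C, hsub (by simp), hsub (by simp)⟩
  choose c hc1 hc2 using hCex
  have hvinj : Function.Injective (fun i : ZMod n => (f i).val) :=
    fun a b hab => hinj (Subtype.ext hab)
  -- no two consecutive edges lie in the same maximal clique
  have hstep : ∀ i : ZMod n, False → True := fun _ _ => trivial
  have hcinj : Function.Injective c := by
    intro i j hij
    by_contra hne
    have hvne : (f i).val ≠ (f j).val := fun hh => hne (hvinj hh)
    have hadjij : G.Adj (f i).val (f j).val :=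
      (c i).2.prop (hc1 i) (hij ▸ hc1 j) hvne
    have hcons := (hiff i j).mp hadjij
    have key : ∀ a : ZMod n, c a = c (a + 1) → False := by
      intro a hca
      -- then f a, f (a+2) both lie in c a, and a ≠ a + 2
      have hne2 : (a : ZMod n) ≠ a + 2 := by
        intro hh
        exact hz 2 (by omega) (by omega) (by push_cast; linear_combination -hh)
      have hmem2 : (f (a + 2)).val ∈ (c a).val := by
        have := hc2 (a + 1)
        rw [← hca] at this
        rwa [show a + 1 + 1 = a + 2 by ring] at this
      have hadj2 : G.Adj (f a).val (f (a + 2)).val :=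
        (c a).2.prop (hc1 a) hmem2 (fun hh => hne2 (hvinj hh))
      rcases (hiff a (a + 2)).mp hadj2 with hh | hh
      · exact hz 1 (by omega) (by omega) (by push_cast; linear_combination hh)
      · exact hz 3 (by omega) (by omega) (by push_cast; linear_combination -hh)
    rcases hcons with hh | hh
    · subst hh
      exact key i hij
    · subst hh
      exact key j hij.symm
  exact ⟨n, ⟨⟨fun i => (f i).val, c, by omega, hvinj, hcinj, hc1, hc2,
    fun i => (f i).2⟩⟩⟩

end Assemble

section Extract

lemma walk_getVert_eq_getElem {α : Type*} {G' : SimpleGraph α} {u v : α} (p : G'.Walk u v) :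
    ∀ (i : ℕ) (h : i < p.support.length), p.getVert i = p.support[i] := by
  induction p with
  | nil =>
    intro i h
    simp only [SimpleGraph.Walk.support_nil, List.length_singleton] at h
    have : i = 0 := by omega
    subst this
    simp [SimpleGraph.Walk.getVert_zero]
  | cons h' q ih =>
    intro i hi
    cases i with
    | zero => simp [SimpleGraph.Walk.getVert_zero]
    | succ i =>
      have hb : i < q.support.length := by
        rw [SimpleGraph.Walk.support_cons] at hi
        simpa using hi
      simp only [SimpleGraph.Walk.support_cons, SimpleGraph.Walk.getVert_cons_succ,
        List.getElem_cons_succ]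
      exact ih i hb

lemma cycle_getVert_inj {α : Type*} {G' : SimpleGraph α} {u : α} {p : G'.Walk u u}
    (hp : p.IsCycle) {i j : ℕ} (hi : i < p.length) (hj : j < p.length)
    (h : p.getVert i = p.getVert j) : i = j := by
  have hlen : p.support.length = p.length + 1 := SimpleGraph.Walk.length_support p
  have hnd := hp.support_nodup
  have htail : p.support.tail.length = p.length := by
    rw [List.length_tail, hlen]
    omega
  have hget : ∀ a : ℕ, 1 ≤ a → a ≤ p.length → ∀ (ha : a - 1 < p.support.tail.length),
      p.getVert a = p.support.tail[a - 1] := by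
    intro a ha1 ha2 ha
    rw [walk_getVert_eq_getElem p a (by omega), List.getElem_tail]
    congr 1
    omega
  have hu : ∀ a : ℕ, 1 ≤ a → a ≤ p.length → p.getVert a = u → a = p.length := by
    intro a ha1 ha2 hau
    have h1 : p.getVert a = p.support.tail[a - 1]'(by omega) := hget a ha1 ha2 (by omega)
    have h2 : p.getVert p.length = p.support.tail[p.length - 1]'(by omega) :=
      hget p.length (by omega) le_rfl (by omega)
    rw [SimpleGraph.Walk.getVert_length] at h2
    have h3 : p.support.tail[a - 1]'(by omega) = p.support.tail[p.length - 1]'(by omega) := by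
      rw [← h1, ← h2, hau]
    have := List.Nodup.getElem_inj_iff hnd |>.mp h3
    omega
  rcases Nat.eq_zero_or_pos i with hi0 | hi1 <;> rcases Nat.eq_zero_or_pos j with hj0 | hj1
  · omega
  · subst hi0
    rw [SimpleGraph.Walk.getVert_zero] at h
    have := hu j hj1 (by omega) h.symm
    omega
  · subst hj0
    rw [SimpleGraph.Walk.getVert_zero] at h
    have := hu i hi1 (by omega) h
    omega
  · have h1 : p.getVert i = p.support.tail[i - 1]'(by omega) := hget i hi1 (by omega) (by omega)
    have h2 : p.getVert j = p.support.tail[j - 1]'(by omega) := hget j hj1 (by omega) (by omega)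
    rw [h1, h2] at h
    have := List.Nodup.getElem_inj_iff hnd |>.mp h
    omega

variable {S : Set V} {Ghat : SimpleGraph (V ⊕ K G)}
variable (hVC : ∀ (u : V) (c : K G),
      Ghat.Adj (Sum.inl u) (Sum.inr c) ↔
        (u ∈ c.val ∧ ∃ c' : K G, c' ≠ c ∧ u ∈ c'.val))
variable (hVV : ∀ u u' : V, ¬ Ghat.Adj (Sum.inl u) (Sum.inl u'))
variable (hCC' : ∀ c c' : K G, ¬ Ghat.Adj (Sum.inr c) (Sum.inr c'))

include hVC hVV hCC' in
lemma extract_cc {x : ↥(Wset G S)} {u0 : V} (hx : x.val = Sum.inl u0)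
    (p : (Ghat.induce (Wset G S)).Walk x x) (hp : p.IsCycle) :
    ∃ k, Nonempty (CC G S k) := by
  classical
  have hlen3 := hp.three_le_length
  have hadjG : ∀ i, i < p.length → Ghat.Adj (p.getVert i).val (p.getVert (i + 1)).val := by
    intro i hi
    exact p.adj_getVert_succ hi
  have hpar : ∀ n, n ≤ p.length →
      (Even n → ∃ u : V, (p.getVert n).val = Sum.inl u) ∧
      (¬ Even n → ∃ cc : K G, (p.getVert n).val = Sum.inr cc) := by
    intro n
    induction n with
    | zero =>
      intro _
      exact ⟨fun _ => ⟨u0, by rw [SimpleGraph.Walk.getVert_zero]; exact hx⟩,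
        fun hodd => absurd (Even.zero : Even 0) hodd⟩
    | succ n ih =>
      intro hn
      have hprev := ih (by omega)
      have hadj := hadjG n (by omega)
      constructor
      · intro hev
        have hodd : ¬ Even n := by
          rw [Nat.even_add_one] at hev
          exact hev
        obtain ⟨cc, hcc2⟩ := hprev.2 hodd
        rw [hcc2] at hadj
        rcases hw : (p.getVert (n + 1)).val with u | cc'
        · exact ⟨u, rfl⟩
        · rw [hw] at hadj
          exact absurd hadj (hCC' _ _)
      · intro hodd
        have hev : Even n := by
          rw [Nat.even_add_one, not_not] at hodd
          exact hodd
        obtain ⟨u, hu⟩ := hprev.1 hev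
        rw [hu] at hadj
        rcases hw : (p.getVert (n + 1)).val with u' | cc
        · rw [hw] at hadj
          exact absurd hadj (hVV _ _)
        · exact ⟨cc, rfl⟩
  have heven : Even p.length := by
    by_contra hodd
    obtain ⟨cc, hcc2⟩ := (hpar p.length le_rfl).2 hodd
    rw [SimpleGraph.Walk.getVert_length, hx] at hcc2
    exact Sum.inl_ne_inr hcc2
  obtain ⟨k, hk⟩ := heven
  have hk2 : 2 ≤ k := by omega
  haveI : NeZero k := ⟨by omega⟩
  haveI : Fact (1 < k) := ⟨by omega⟩
  have hVex : ∀ m : ℕ, ∃ u : V, 2 * m ≤ p.length → (p.getVert (2 * m)).val = Sum.inl u := by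
    intro m
    by_cases hm : 2 * m ≤ p.length
    · obtain ⟨u, hu⟩ := (hpar (2 * m) hm).1 ⟨m, by ring⟩
      exact ⟨u, fun _ => hu⟩
    · exact ⟨u0, fun hh => absurd hh hm⟩
  have hCex : ∀ m : ℕ, ∃ cc : K G, 2 * m + 1 ≤ p.length →
      (p.getVert (2 * m + 1)).val = Sum.inr cc := by
    intro m
    by_cases hm : 2 * m + 1 ≤ p.length
    · obtain ⟨cc, hcc2⟩ := (hpar (2 * m + 1) hm).2 (by simp [Nat.even_add_one, parity_simps])
      exact ⟨cc, fun _ => hcc2⟩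
    · obtain ⟨cc, hcc2⟩ := (hpar 1 (by omega)).2 (by simp)
      exact ⟨cc, fun hh => absurd hh hm⟩
  choose fV hfV using hVex
  choose fC hfC using hCex
  have hlen2 : p.length = 2 * k := by omega
  have hfV0 : fV k = fV 0 := by
    have h1 := hfV k (by omega)
    have h0 := hfV 0 (by omega)
    rw [show 2 * k = p.length by omega, SimpleGraph.Walk.getVert_length] at h1
    rw [Nat.mul_zero, SimpleGraph.Walk.getVert_zero] at h0
    rw [h1] at h0
    exact (Sum.inl.injEq _ _).mp h0
  refine ⟨k, ⟨⟨fun i => fV i.val, fun i => fC i.val, hk2, ?_, ?_, ?_, ?_, ?_⟩⟩⟩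
  · -- injectivity of v
    intro a b h
    have hva := ZMod.val_lt a
    have hvb := ZMod.val_lt b
    have ha := hfV a.val (by omega)
    have hb := hfV b.val (by omega)
    have h' : fV a.val = fV b.val := h
    have hval : p.getVert (2 * a.val) = p.getVert (2 * b.val) := by
      apply Subtype.ext
      rw [ha, hb, h']
    have := cycle_getVert_inj hp (by omega) (by omega) hval
    exact ZMod.val_injective _ (by omega)
  · -- injectivity of c
    intro a b h
    have hva := ZMod.val_lt a
    have hvb := ZMod.val_lt b
    have ha := hfC a.val (by omega)
    have hb := hfC b.val (by omega)
    have h' : fC a.val = fC b.val := h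
    have hval : p.getVert (2 * a.val + 1) = p.getVert (2 * b.val + 1) := by
      apply Subtype.ext
      rw [ha, hb, h']
    have := cycle_getVert_inj hp (by omega) (by omega) hval
    exact ZMod.val_injective _ (by omega)
  · -- hm1
    intro i
    have hvi := ZMod.val_lt i
    have hadj := hadjG (2 * i.val) (by omega)
    rw [hfV i.val (by omega), hfC i.val (by omega)] at hadj
    exact ((hVC _ _).mp hadj).1
  · -- hm2
    intro i
    have hvi := ZMod.val_lt i
    have hadj := hadjG (2 * i.val + 1) (by omega)
    rw [hfC i.val (by omega)] at hadj
    rw [show 2 * i.val + 1 + 1 = 2 * (i.val + 1) by ring] at hadj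
    rw [hfV (i.val + 1) (by omega)] at hadj
    have hmem := ((hVC _ _).mp hadj.symm).1
    by_cases hcase : i.val + 1 < k
    · have hval1 : (i + 1).val = i.val + 1 := by
        rw [ZMod.val_add, ZMod.val_one, Nat.mod_eq_of_lt (by omega)]
      show fV (i + 1).val ∈ (fC i.val).val
      rw [hval1]
      exact hmem
    · have hieq : i.val = k - 1 := by omega
      have hval1 : (i + 1).val = 0 := by
        rw [ZMod.val_add, ZMod.val_one, hieq, show k - 1 + 1 = k by omega, Nat.mod_self]
      show fV (i + 1).val ∈ (fC i.val).val
      rw [hval1]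
      rw [show i.val + 1 = k by omega] at hmem
      rw [hfV0] at hmem
      exact hmem
  · -- hS
    intro i hmem
    have hvi := ZMod.val_lt i
    exact (p.getVert (2 * i.val)).2 (fV i.val) hmem (hfV i.val (by omega))

include hVC hVV hCC' in
lemma not_acyclic_to_cc (h : ¬ (Ghat.induce (Wset G S)).IsAcyclic) :
    ∃ k, Nonempty (CC G S k) := by
  classical
  unfold SimpleGraph.IsAcyclic at h
  push_neg at h
  obtain ⟨x, p, hp⟩ := h
  rcases hx : x.val with u | cc
  · exact extract_cc hVC hVV hCC' hx p hp
  · have h1len : 1 ≤ p.length := by have := hp.three_le_length; omega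
    rcases hy : (p.getVert 1).val with u | cc'
    · have hmem : p.getVert 1 ∈ p.support :=
        SimpleGraph.Walk.mem_support_iff_exists_getVert.mpr ⟨1, rfl, by omega⟩
      exact extract_cc hVC hVV hCC' hy (p.rotate _ hmem) (hp.rotate hmem)
    · have hadj : Ghat.Adj x.val (p.getVert 1).val := by
        have : (Ghat.induce (Wset G S)).Adj (p.getVert 0) (p.getVert 1) :=
          p.adj_getVert_succ (by omega)
        rw [SimpleGraph.Walk.getVert_zero] at this
        exact this
      rw [hx, hy] at hadj
      exact absurd hadj (hCC' _ _)

end Extract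

end Stmt9Aux


theorem stmt_9 {V : Type*} [Fintype V] (G : SimpleGraph V)
    (hC4 : ∀ a b c d : V, ¬ IsInducedC4 G a b c d)
    (hD : ∀ a b c d : V, ¬ IsInducedDiamond G a b c d)
    (Ghat : SimpleGraph (V ⊕ {s : Set V // Maximal G.IsClique s}))
    (hVC : ∀ (u : V) (c : {s : Set V // Maximal G.IsClique s}),
      Ghat.Adj (Sum.inl u) (Sum.inr c) ↔
        (u ∈ c.val ∧ ∃ c' : {s : Set V // Maximal G.IsClique s}, c' ≠ c ∧ u ∈ c'.val))
    (hVV : ∀ u u' : V, ¬ Ghat.Adj (Sum.inl u) (Sum.inl u'))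
    (hCC : ∀ c c' : {s : Set V // Maximal G.IsClique s},
      ¬ Ghat.Adj (Sum.inr c) (Sum.inr c')) :
    ∀ S : Set V,
      IsBlockGraph (G.induce Sᶜ) ↔
        (Ghat.induce {w | ∀ s ∈ S, w ≠ Sum.inl s}).IsAcyclic := by
  intro S
  constructor
  · intro hbg
    by_contra hnac
    exact hbg.1 (Stmt9Aux.cc_to_long hD
      (Stmt9Aux.not_acyclic_to_cc hVC hVV hCC hnac))
  · intro hac
    constructor
    · intro hcyc
      obtain ⟨k, ⟨D⟩⟩ := Stmt9Aux.long_to_cc hcyc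
      exact D.not_acyclic hVC hac
    · intro a b c d hdia
      obtain ⟨h1, h2, h3, h4, h5, h6, h7, h8, h9, h10, h11, h12⟩ := hdia
      exact hD a.val b.val c.val d.val
        ⟨fun h => h1 (Subtype.ext h), fun h => h2 (Subtype.ext h), fun h => h3 (Subtype.ext h),
         fun h => h4 (Subtype.ext h), fun h => h5 (Subtype.ext h), fun h => h6 (Subtype.ext h),
         h7, h8, h9, h10, h11, h12⟩
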